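/- Let G = (Σ, N, A_1, R, p) be a proper, reduced stochastic context-free grammar with nonterminals N = {A_1, …, A_m}, and let M be the expectation matrix M_{i,n} = Σ_j p(A_i → B_{i,j}) · r_n(i,j), where r_n(i,j) is the number of occurrences of A_n in the right-hand side B_{i,j}. If ρ(M) < 1, then for every nonterminal A_i (1 ≤ i ≤ m) one has Σ_{π̄ ∈ Ω_i} p(π̄) = 1, where Ω_i is the set of all complete leftmost derivations starting at A_i and ending in a terminal string. -/

import Mathlib

open scoped NNReal ENNReal


/-- A stochastic context-free grammar with nonterminals `Fin m` (start symbol `0`,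
playing the role of `A₁`), terminals `Fin k`, rules indexed by the finite type `ρ`
(with premise `prem π` and right-hand side `rhs π`), and a weight
`p : ρ → [0,1]`. -/
structure SCFG (m k : ℕ) (ρ : Type) [Fintype ρ] where
  prem : ρ → Fin m
  rhs : ρ → List (Fin m ⊕ Fin k)
  p : ρ → ℝ
  p_nonneg : ∀ π, 0 ≤ p π
  p_le_one : ∀ π, p π ≤ 1

namespace SCFG

variable {m k : ℕ} {ρ : Type} [Fintype ρ] (G : SCFG m k ρ)

/-- The leftmost rewriting relation: `s` rewrites to `s'` by applying rule `π` to the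
leftmost nonterminal of `s`. -/
def LeftmostStep (s : List (Fin m ⊕ Fin k)) (π : ρ) (s' : List (Fin m ⊕ Fin k)) : Prop :=
  ∃ (u : List (Fin k)) (δ : List (Fin m ⊕ Fin k)),
    s = u.map Sum.inr ++ Sum.inl (G.prem π) :: δ ∧
    s' = u.map Sum.inr ++ G.rhs π ++ δ

/-- `StepSeq s l s'`: applying the rules of the list `l` in turn, each rewriting the
leftmost nonterminal, transforms the sentential form `s` into `s'`. -/
inductive StepSeq : List (Fin m ⊕ Fin k) → List ρ → List (Fin m ⊕ Fin k) → Prop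
  | nil (s : List (Fin m ⊕ Fin k)) : StepSeq s [] s
  | cons {s s' s'' : List (Fin m ⊕ Fin k)} {π : ρ} {l : List ρ} :
      G.LeftmostStep s π s' → StepSeq s' l s'' → StepSeq s (π :: l) s''

/-- A sentential form consisting only of terminals. -/
def IsTerminalString (s : List (Fin m ⊕ Fin k)) : Prop :=
  ∃ u : List (Fin k), s = u.map Sum.inr

/-- `CompleteDeriv i l`: the rule list `l` is a complete leftmost derivation starting
at the nonterminal `i` and ending in a terminal string. -/
def CompleteDeriv (i : Fin m) (l : List ρ) : Prop :=
  ∃ s, G.StepSeq [Sum.inl i] l s ∧ IsTerminalString s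

/-- The probability of a derivation: the product of the probabilities of its rules. -/
def weight (l : List ρ) : ℝ := (l.map G.p).prod

/-- `G` is proper: for each nonterminal, the weights of the rules with that premise
sum to `1`. -/
def Proper : Prop :=
  ∀ i : Fin m, ∑ π ∈ Finset.univ.filter (fun π => G.prem π = i), G.p π = 1

/-- A nonterminal is productive if some complete leftmost derivation starts at it. -/
def Productive (i : Fin m) : Prop := ∃ l, G.CompleteDeriv i l

/-- A nonterminal is accessible if some leftmost derivation sequence from the start
symbol produces a sentential form containing it. -/
def Accessible [NeZero m] (i : Fin m) : Prop :=
  ∃ l s, G.StepSeq [Sum.inl (0 : Fin m)] l s ∧ Sum.inl i ∈ s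

/-- The expectation matrix `M i n = ∑_j p(Aᵢ → B_{i,j}) · r_n(i,j)`, where `r_n(i,j)`
is the number of occurrences of the nonterminal `n` in the right-hand side of the
`j`-th rule with premise `i`. -/
noncomputable def expectationMatrix : Matrix (Fin m) (Fin m) ℝ :=
  fun i n => ∑ π ∈ Finset.univ.filter (fun π => G.prem π = i),
    G.p π * ((G.rhs π).count (Sum.inl n) : ℝ)

end SCFG

namespace SCFG

variable {m k : ℕ} {ρ : Type} [Fintype ρ]

def derivB (G : SCFG m k ρ) : List (Fin m ⊕ Fin k) → List ρ → Bool
  | [], [] => true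
  | [], _ :: _ => false
  | .inr _ :: s, l => derivB G s l
  | .inl _ :: _, [] => false
  | .inl i :: s, π :: l => decide (G.prem π = i) && derivB G (G.rhs π ++ s) l
  termination_by s l => (l.length, s.length)

variable (G : SCFG m k ρ)

@[simp] theorem derivB_nil_nil : G.derivB [] [] = true := by simp [derivB]
@[simp] theorem derivB_nil_cons (π : ρ) (l : List ρ) : G.derivB [] (π :: l) = false := by
  simp [derivB]
@[simp] theorem derivB_inr (a : Fin k) (s : List (Fin m ⊕ Fin k)) (l : List ρ) :
    G.derivB (.inr a :: s) l = G.derivB s l := by simp [derivB]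
@[simp] theorem derivB_inl_nil (i : Fin m) (s : List (Fin m ⊕ Fin k)) :
    G.derivB (.inl i :: s) [] = false := by simp [derivB]
theorem derivB_inl_cons (i : Fin m) (s : List (Fin m ⊕ Fin k)) (π : ρ) (l : List ρ) :
    G.derivB (.inl i :: s) (π :: l)
      = (decide (G.prem π = i) && G.derivB (G.rhs π ++ s) l) := by
  simp [derivB]
theorem derivB_nil_iff (l : List ρ) : G.derivB [] l = true ↔ l = [] := by
  cases l <;> simp
theorem derivB_map_inr (u : List (Fin k)) (s : List (Fin m ⊕ Fin k)) (l : List ρ) :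
    G.derivB (u.map Sum.inr ++ s) l = G.derivB s l := by
  induction u with
  | nil => rfl
  | cons a u ih => simpa using ih

/-! interface -/

theorem stepSeq_cons_inr {s t : List (Fin m ⊕ Fin k)} {l : List ρ} (a : Fin k)
    (h : G.StepSeq s l t) : G.StepSeq (.inr a :: s) l (.inr a :: t) := by
  induction h with
  | nil s => exact .nil _
  | cons hstep _ ih =>
    refine .cons ?_ ih
    obtain ⟨u, δ, h1, h2⟩ := hstep
    exact ⟨a :: u, δ, by simp [h1], by simp [h2]⟩

theorem deriv_of_derivB {s : List (Fin m ⊕ Fin k)} {l : List ρ}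
    (h : G.derivB s l = true) : ∃ t, G.StepSeq s l t ∧ IsTerminalString t := by
  induction s, l using derivB.induct G with
  | case1 => exact ⟨[], .nil _, [], rfl⟩
  | case2 => simp at h
  | case3 a s l ih =>
    rw [derivB_inr] at h
    obtain ⟨t, hss, u, rfl⟩ := ih h
    exact ⟨.inr a :: u.map Sum.inr, G.stepSeq_cons_inr a hss, a :: u, rfl⟩
  | case4 _ _ => simp at h
  | case5 i s π l ih =>
    rw [derivB_inl_cons, Bool.and_eq_true, decide_eq_true_eq] at h
    obtain ⟨hp, hd⟩ := h
    obtain ⟨t, hss, ht⟩ := ih hd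
    refine ⟨t, .cons ⟨[], s, by simp [hp], by simp⟩ hss, ht⟩

theorem derivB_of_deriv {s t : List (Fin m ⊕ Fin k)} {l : List ρ}
    (h : G.StepSeq s l t) (ht : IsTerminalString t) : G.derivB s l = true := by
  induction h with
  | nil s =>
    obtain ⟨u, rfl⟩ := ht
    have := G.derivB_map_inr u [] []
    simpa using this
  | cons hstep _ ih =>
    obtain ⟨u, δ, rfl, rfl⟩ := hstep
    have h2 := ih ht
    rw [List.append_assoc, derivB_map_inr] at h2
    rw [derivB_map_inr, derivB_inl_cons, Bool.and_eq_true, decide_eq_true_eq]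
    exact ⟨rfl, h2⟩

end SCFG

namespace SCFG

theorem derivB_append_split {m k : ℕ} {ρ : Type} [Fintype ρ] (G : SCFG m k ρ) :
    ∀ (l : List ρ) (s t : List (Fin m ⊕ Fin k)), G.derivB (s ++ t) l = true →
      ∃ l1 l2, l = l1 ++ l2 ∧ G.derivB s l1 = true ∧ G.derivB t l2 = true
  | l, [], t, h => ⟨[], l, rfl, G.derivB_nil_nil, h⟩
  | l, .inr a :: s, t, h => by
    rw [List.cons_append, derivB_inr] at h
    exact (fun ⟨l1, l2, h1, h2, h3⟩ => ⟨l1, l2, h1, by simpa using h2, h3⟩)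
      (derivB_append_split G l s t h)
  | [], .inl i :: s, t, h => by simp at h
  | π :: l, .inl i :: s, t, h => by
    rw [List.cons_append, derivB_inl_cons, Bool.and_eq_true, decide_eq_true_eq] at h
    obtain ⟨hp, hd⟩ := h
    rw [← List.append_assoc] at hd
    obtain ⟨l1, l2, h1, h2, h3⟩ := derivB_append_split G l (G.rhs π ++ s) t hd
    exact ⟨π :: l1, l2, by simp [h1], by
      rw [derivB_inl_cons, Bool.and_eq_true, decide_eq_true_eq]; exact ⟨hp, h2⟩, h3⟩
  termination_by l s => (l.length, s.length)

theorem derivB_append_of {m k : ℕ} {ρ : Type} [Fintype ρ] (G : SCFG m k ρ) :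
    ∀ (l1 : List ρ) (s : List (Fin m ⊕ Fin k)) (l2 : List ρ) (t : List (Fin m ⊕ Fin k)),
      G.derivB s l1 = true → G.derivB t l2 = true → G.derivB (s ++ t) (l1 ++ l2) = true
  | l1, [], l2, t, h1, h2 => by
    rw [(G.derivB_nil_iff l1).1 h1]; exact h2
  | l1, .inr a :: s, l2, t, h1, h2 => by
    rw [derivB_inr] at h1
    rw [List.cons_append, derivB_inr]
    exact derivB_append_of G l1 s l2 t h1 h2
  | [], .inl i :: s, l2, t, h1, h2 => by simp at h1
  | π :: l1, .inl i :: s, l2, t, h1, h2 => by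
    rw [derivB_inl_cons, Bool.and_eq_true, decide_eq_true_eq] at h1
    rw [List.cons_append, List.cons_append, derivB_inl_cons, Bool.and_eq_true,
      decide_eq_true_eq]
    refine ⟨h1.1, ?_⟩
    rw [← List.append_assoc]
    exact derivB_append_of G l1 (G.rhs π ++ s) l2 t h1.2 h2
  termination_by l1 s => (l1.length, s.length)

theorem derivB_prefix {m k : ℕ} {ρ : Type} [Fintype ρ] (G : SCFG m k ρ) :
    ∀ (l1 : List ρ) (s : List (Fin m ⊕ Fin k)) (l2 : List ρ),
      G.derivB s l1 = true → G.derivB s (l1 ++ l2) = true → l2 = []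
  | l1, [], l2, h1, h2 => by
    rw [G.derivB_nil_iff] at h1; subst h1
    simpa using (G.derivB_nil_iff l2).1 h2
  | l1, .inr a :: s, l2, h1, h2 => by
    rw [derivB_inr] at h1 h2
    exact derivB_prefix G l1 s l2 h1 h2
  | [], .inl i :: s, l2, h1, h2 => by simp at h1
  | π :: l1, .inl i :: s, l2, h1, h2 => by
    rw [derivB_inl_cons, Bool.and_eq_true] at h1
    rw [List.cons_append, derivB_inl_cons, Bool.and_eq_true] at h2
    exact derivB_prefix G l1 (G.rhs π ++ s) l2 h1.2 h2.2
  termination_by l1 s => (l1.length, s.length)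

end SCFG

namespace SCFG
variable {m k : ℕ} {ρ : Type} [Fintype ρ]

noncomputable def pn (G : SCFG m k ρ) (π : ρ) : ℝ≥0 := ⟨G.p π, G.p_nonneg π⟩

noncomputable def wN (G : SCFG m k ρ) (l : List ρ) : ℝ≥0 := (l.map G.pn).prod

variable (G : SCFG m k ρ)

@[simp] theorem wN_nil : G.wN [] = 1 := rfl
@[simp] theorem wN_cons (π : ρ) (l : List ρ) : G.wN (π :: l) = G.pn π * G.wN l := by
  simp [wN]

theorem kraft (hp : ∀ i : Fin m,
      ∑ π ∈ Finset.univ.filter (fun π => G.prem π = i), G.pn π = 1) :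
    ∀ (n : ℕ) (s : List (Fin m ⊕ Fin k)) (F : Finset (List ρ)),
      (∀ l ∈ F, G.derivB s l = true ∧ l.length ≤ n) → (∑ l ∈ F, G.wN l) ≤ 1
  | n, [], F, hF => by
    have hsub : F ⊆ {[]} := by
      intro l hl
      have := (G.derivB_nil_iff l).1 (hF l hl).1
      simp [this]
    calc ∑ l ∈ F, G.wN l ≤ ∑ l ∈ ({[]} : Finset (List ρ)), G.wN l :=
          Finset.sum_le_sum_of_subset hsub
      _ = 1 := by simp
  | n, .inr a :: s, F, hF => by
    refine kraft hp n s F (fun l hl => ?_)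
    have := hF l hl
    rwa [derivB_inr] at this
  | 0, .inl i :: s, F, hF => by
    have : F = ∅ := by
      rw [Finset.eq_empty_iff_forall_notMem]
      intro l hl
      obtain ⟨h1, h2⟩ := hF l hl
      have h2' : l = [] := List.eq_nil_of_length_eq_zero (Nat.le_zero.mp h2)
      subst h2'
      simp at h1
    simp [this]
  | n + 1, .inl i :: s, F, hF => by
    classical
    have hcons : ∀ l ∈ F, ∃ (π : ρ) (l' : List ρ),
        l = π :: l' ∧ G.prem π = i ∧ G.derivB (G.rhs π ++ s) l' = true ∧ l'.length ≤ n := by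
      intro l hl
      obtain ⟨h1, h2⟩ := hF l hl
      match l with
      | [] => simp at h1
      | π :: l' =>
        rw [derivB_inl_cons, Bool.and_eq_true, decide_eq_true_eq] at h1
        exact ⟨π, l', rfl, h1.1, h1.2, by simpa using h2⟩
    have key : ∑ l ∈ F, G.wN l
        = ∑ o : Option ρ, ∑ l ∈ F.filter (fun l => l.head? = o), G.wN l :=
      (Finset.sum_fiberwise F (fun l => l.head?) G.wN).symm
    rw [key]
    have hbound : ∀ o : Option ρ,
        (∑ l ∈ F.filter (fun l => l.head? = o), G.wN l)
          ≤ o.elim 0 (fun π => if G.prem π = i then G.pn π else 0) := by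
      intro o
      match o with
      | none =>
        have : F.filter (fun l => l.head? = none) = ∅ := by
          rw [Finset.eq_empty_iff_forall_notMem]
          intro l hl
          rw [Finset.mem_filter] at hl
          obtain ⟨π, l', rfl, -⟩ := hcons l hl.1
          simp at hl
        rw [this, Finset.sum_empty]
        exact le_refl _
      | some π =>
        by_cases hpi : G.prem π = i
        · -- fiber sum = pn π * (sum over tails) ≤ pn π
          have htail : ∀ l ∈ F.filter (fun l => l.head? = some π), l = π :: l.tail := by
            intro l hl
            rw [Finset.mem_filter] at hl
            obtain ⟨π', l', rfl, -⟩ := hcons l hl.1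
            have : π' = π := by simpa using hl.2
            simp [this]
          have hsum : ∑ l ∈ F.filter (fun l => l.head? = some π), G.wN l
              = G.pn π * ∑ l' ∈ (F.filter (fun l => l.head? = some π)).image List.tail,
                  G.wN l' := by
            rw [Finset.mul_sum, Finset.sum_image ?hinj]
            case hinj =>
              intro l1 h1 l2 h2 he
              rw [htail l1 h1, htail l2 h2, he]
            refine Finset.sum_congr rfl (fun l hl => ?_)
            conv_lhs => rw [htail l hl]
            simp
          rw [hsum]
          simp only [Option.elim_some, hpi, if_true]
          have hle : ∑ l' ∈ (F.filter (fun l => l.head? = some π)).image List.tail,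
              G.wN l' ≤ 1 := by
            refine kraft hp n (G.rhs π ++ s) _ (fun l' hl' => ?_)
            rw [Finset.mem_image] at hl'
            obtain ⟨l, hl, rfl⟩ := hl'
            rw [Finset.mem_filter] at hl
            obtain ⟨π', t, rfl, hpi', hd, hlen⟩ := hcons l hl.1
            have : π' = π := by simpa using hl.2
            subst this
            simpa using ⟨hd, hlen⟩
          calc G.pn π * _ ≤ G.pn π * 1 := by
                exact mul_le_mul_of_nonneg_left hle (zero_le)
            _ = G.pn π := mul_one _
        · have : F.filter (fun l => l.head? = some π) = ∅ := by
            rw [Finset.eq_empty_iff_forall_notMem]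
            intro l hl
            rw [Finset.mem_filter] at hl
            obtain ⟨π', l', rfl, hpi', -⟩ := hcons l hl.1
            have : π' = π := by simpa using hl.2
            subst this
            exact hpi hpi'
          rw [this, Finset.sum_empty]
          exact zero_le
    calc ∑ o : Option ρ, ∑ l ∈ F.filter (fun l => l.head? = o), G.wN l
        ≤ ∑ o : Option ρ, o.elim 0 (fun π => if G.prem π = i then G.pn π else 0) :=
          Finset.sum_le_sum (fun o _ => hbound o)
      _ = ∑ π : ρ, (if G.prem π = i then G.pn π else 0) := by
          rw [Fintype.sum_option]; simp
      _ = 1 := by rw [← Finset.sum_filter]; exact hp i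
  termination_by n s => (n, s.length)

end SCFG

namespace SCFG
variable {m k : ℕ} {ρ : Type} [Fintype ρ]

theorem wN_append (G : SCFG m k ρ) (l1 l2 : List ρ) :
    G.wN (l1 ++ l2) = G.wN l1 * G.wN l2 := by
  simp [wN]

noncomputable def qE (G : SCFG m k ρ) (s : List (Fin m ⊕ Fin k)) : ℝ≥0∞ :=
  ∑' l : {l : List ρ // G.derivB s l = true}, (G.wN l.1 : ℝ≥0∞)

variable (G : SCFG m k ρ)

theorem qE_le_one (hp : ∀ i : Fin m,
      ∑ π ∈ Finset.univ.filter (fun π => G.prem π = i), G.pn π = 1)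
    (s : List (Fin m ⊕ Fin k)) : G.qE s ≤ 1 := by
  rw [qE, ENNReal.tsum_eq_iSup_sum]
  refine iSup_le (fun F => ?_)
  classical
  have himg : ∑ a ∈ F, (G.wN a.1 : ℝ≥0∞)
      = ∑ l ∈ F.image Subtype.val, (G.wN l : ℝ≥0∞) := by
    rw [Finset.sum_image (fun a _ b _ h => Subtype.val_injective h)]
  rw [himg]
  set F' : Finset (List ρ) := F.image Subtype.val with hF'
  have hkraft := G.kraft hp (F'.sup List.length) s F' (fun l hl => by
    refine ⟨?_, Finset.le_sup hl⟩
    rw [hF', Finset.mem_image] at hl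
    obtain ⟨⟨l', hl'⟩, -, rfl⟩ := hl
    exact hl')
  calc ∑ l ∈ F', (G.wN l : ℝ≥0∞) = ((∑ l ∈ F', G.wN l : ℝ≥0) : ℝ≥0∞) := by
        rw [ENNReal.coe_finset_sum]
    _ ≤ 1 := by exact_mod_cast hkraft

theorem qE_nil : G.qE [] = 1 := by
  rw [qE]
  have hu : ∀ b : {l : List ρ // G.derivB [] l = true}, b = ⟨[], G.derivB_nil_nil⟩ := by
    rintro ⟨l, hl⟩
    simpa [Subtype.ext_iff] using (G.derivB_nil_iff l).1 hl
  rw [tsum_eq_single (⟨[], G.derivB_nil_nil⟩ : {l : List ρ // G.derivB [] l = true})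
    (fun b hb => absurd (hu b) hb)]
  simp

theorem qE_inr (a : Fin k) (s : List (Fin m ⊕ Fin k)) : G.qE (.inr a :: s) = G.qE s := by
  rw [qE, qE]
  exact tsum_congr_subtype (fun l => (G.wN l : ℝ≥0∞)) (fun l => by simp)

theorem qE_append (s t : List (Fin m ⊕ Fin k)) : G.qE (s ++ t) = G.qE s * G.qE t := by
  classical
  have hg : Function.Bijective (fun x : {l // G.derivB s l = true} × {l // G.derivB t l = true} =>
      (⟨x.1.1 ++ x.2.1, derivB_append_of G x.1.1 s x.2.1 t x.1.2 x.2.2⟩ :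
        {l // G.derivB (s ++ t) l = true})) := by
    constructor
    · rintro ⟨⟨l1, h1⟩, ⟨l2, h2⟩⟩ ⟨⟨l1', h1'⟩, ⟨l2', h2'⟩⟩ he
      rw [Subtype.ext_iff] at he
      simp only at he
      have hpre : l1 <+: l1' ∨ l1' <+: l1 :=
        (List.prefix_or_prefix_of_prefix ⟨l2, rfl⟩ ⟨l2', he.symm⟩ : _)
      have h11 : l1 = l1' := by
        rcases hpre with ⟨d, rfl⟩ | ⟨d, rfl⟩
        · have := derivB_prefix G l1 s d h1 h1'
          simp [this]
        · have := derivB_prefix G l1' s d h1' h1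
          simp [this]
      subst h11
      have : l2 = l2' := List.append_cancel_left he
      subst this
      rfl
    · rintro ⟨l, hl⟩
      obtain ⟨l1, l2, rfl, h1, h2⟩ := derivB_append_split G l s t hl
      exact ⟨⟨⟨l1, h1⟩, ⟨l2, h2⟩⟩, rfl⟩
  calc G.qE (s ++ t)
      = ∑' x : {l // G.derivB s l = true} × {l // G.derivB t l = true},
          ((G.wN x.1.1 : ℝ≥0∞) * (G.wN x.2.1 : ℝ≥0∞)) := by
        rw [qE, ← Equiv.tsum_eq (Equiv.ofBijective _ hg) (fun l => (G.wN l.1 : ℝ≥0∞))]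
        refine tsum_congr (fun x => ?_)
        simp [Equiv.ofBijective, wN_append]
    _ = G.qE s * G.qE t := by
        rw [ENNReal.tsum_prod']
        simp_rw [ENNReal.tsum_mul_left, ENNReal.tsum_mul_right]
        rfl

end SCFG

namespace SCFG
variable {m k : ℕ} {ρ : Type} [Fintype ρ] (G : SCFG m k ρ)

theorem qE_eq_prod (s : List (Fin m ⊕ Fin k)) :
    G.qE s = (s.map (fun sym => G.qE [sym])).prod := by
  induction s with
  | nil => simpa using G.qE_nil
  | cons x s ih =>
    have : (x :: s) = [x] ++ s := rfl
    rw [this, G.qE_append, ih]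
    simp

theorem qE_singleton_inr (a : Fin k) : G.qE [Sum.inr a] = 1 := by
  rw [show ([Sum.inr a] : List (Fin m ⊕ Fin k)) = Sum.inr a :: [] from rfl, G.qE_inr, G.qE_nil]

theorem qE_one_step (i : Fin m) :
    G.qE [Sum.inl i] = ∑ π ∈ Finset.univ.filter (fun π => G.prem π = i),
      (G.pn π : ℝ≥0∞) * G.qE (G.rhs π) := by
  classical
  have hg : Function.Bijective
      (fun x : (Σ π : {π : ρ // G.prem π = i}, {l : List ρ // G.derivB (G.rhs π.1) l = true}) =>
        (⟨x.1.1 :: x.2.1, by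
          rw [derivB_inl_cons, Bool.and_eq_true, decide_eq_true_eq, List.append_nil]
          exact ⟨x.1.2, x.2.2⟩⟩ : {l : List ρ // G.derivB [Sum.inl i] l = true})) := by
    constructor
    · rintro ⟨⟨π, hπ⟩, ⟨l, hl⟩⟩ ⟨⟨π', hπ'⟩, ⟨l', hl'⟩⟩ he
      rw [Subtype.ext_iff] at he
      simp only [List.cons.injEq] at he
      obtain ⟨rfl, rfl⟩ := he
      rfl
    · rintro ⟨l, hl⟩
      match l, hl with
      | [], hl => simp at hl
      | π :: l, hl =>
        rw [derivB_inl_cons, Bool.and_eq_true, decide_eq_true_eq, List.append_nil] at hl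
        exact ⟨⟨⟨π, hl.1⟩, ⟨l, hl.2⟩⟩, rfl⟩
  calc G.qE [Sum.inl i]
      = ∑' x : (Σ π : {π : ρ // G.prem π = i}, {l : List ρ // G.derivB (G.rhs π.1) l = true}),
          ((G.pn x.1.1 : ℝ≥0∞) * (G.wN x.2.1 : ℝ≥0∞)) := by
        rw [qE, ← Equiv.tsum_eq (Equiv.ofBijective _ hg)
          (fun l : {l : List ρ // G.derivB [Sum.inl i] l = true} => (G.wN l.1 : ℝ≥0∞))]
        refine tsum_congr (fun x => ?_)
        simp [Equiv.ofBijective, ENNReal.coe_mul]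
    _ = ∑' π : {π : ρ // G.prem π = i}, (G.pn π.1 : ℝ≥0∞) * G.qE (G.rhs π.1) := by
        rw [ENNReal.tsum_sigma']
        refine tsum_congr (fun π => ?_)
        show ∑' (b : {l : List ρ // G.derivB (G.rhs π.1) l = true}),
            (G.pn π.1 : ℝ≥0∞) * (G.wN b.1 : ℝ≥0∞)
          = (G.pn π.1 : ℝ≥0∞) * G.qE (G.rhs π.1)
        exact ENNReal.tsum_mul_left
    _ = ∑ π ∈ Finset.univ.filter (fun π => G.prem π = i),
          (G.pn π : ℝ≥0∞) * G.qE (G.rhs π) := by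
        rw [tsum_fintype]
        exact (Finset.sum_subtype (Finset.univ.filter (fun π => G.prem π = i))
          (p := fun π => G.prem π = i) (fun π => by simp)
          (fun π => (G.pn π : ℝ≥0∞) * G.qE (G.rhs π))).symm

end SCFG

namespace SCFG
variable {m k : ℕ} {ρ : Type} [Fintype ρ]

theorem toReal_list_prod (l : List ℝ≥0∞) : (l.prod).toReal = (l.map ENNReal.toReal).prod := by
  induction l with
  | nil => simp
  | cons x l ih => simp [ENNReal.toReal_mul, ih]

theorem prod_mem_Icc (l : List ℝ) (h : ∀ x ∈ l, 0 ≤ x ∧ x ≤ 1) :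
    0 ≤ l.prod ∧ l.prod ≤ 1 := by
  induction l with
  | nil => simp
  | cons x l ih =>
    obtain ⟨h0, h1⟩ := h x (List.mem_cons_self)
    obtain ⟨ih0, ih1⟩ := ih (fun y hy => h y (List.mem_cons_of_mem _ hy))
    rw [List.prod_cons]
    exact ⟨mul_nonneg h0 ih0, mul_le_one₀ h1 ih0 ih1⟩

theorem one_sub_prod_le (l : List ℝ) (h : ∀ x ∈ l, 0 ≤ x ∧ x ≤ 1) :
    1 - l.prod ≤ (l.map (fun x => 1 - x)).sum := by
  induction l with
  | nil => simp
  | cons x l ih =>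
    obtain ⟨h0, h1⟩ := h x (List.mem_cons_self)
    have hrest := fun y hy => h y (List.mem_cons_of_mem _ hy)
    obtain ⟨hp0, hp1⟩ := prod_mem_Icc l hrest
    rw [List.prod_cons, List.map_cons, List.sum_cons]
    have : 1 - x * l.prod = (1 - x) + x * (1 - l.prod) := by ring
    rw [this]
    have h2 : x * (1 - l.prod) ≤ 1 - l.prod :=
      mul_le_of_le_one_left (by linarith) h1
    linarith [ih hrest]

theorem sum_map_count (s : List (Fin m ⊕ Fin k)) (g : Fin m ⊕ Fin k → ℝ)
    (hg : ∀ a : Fin k, g (Sum.inr a) = 0) :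
    (s.map g).sum = ∑ n : Fin m, (s.count (Sum.inl n) : ℝ) * g (Sum.inl n) := by
  induction s with
  | nil => simp
  | cons x s ih =>
    rw [List.map_cons, List.sum_cons, ih]
    cases x with
    | inr a =>
      rw [hg a, zero_add]
      refine Finset.sum_congr rfl (fun n _ => ?_)
      rw [List.count_cons]
      have : ((Sum.inr a : Fin m ⊕ Fin k) == Sum.inl n) = false := rfl
      simp [this]
    | inl j =>
      have : ∀ n : Fin m, ((Sum.inl j :: s : List (Fin m ⊕ Fin k)).count (Sum.inl n) : ℝ)
          = (s.count (Sum.inl n) : ℝ) + if j = n then 1 else 0 := by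
        intro n
        rw [List.count_cons]
        have hbeq : ((Sum.inl j : Fin m ⊕ Fin k) == Sum.inl n) = decide (j = n) := by
          show decide _ = _
          by_cases hjn : j = n <;> simp [hjn]
        rw [hbeq]
        by_cases hjn : j = n <;> simp [hjn]
      simp_rw [this, add_mul, Finset.sum_add_distrib, ite_mul, zero_mul, one_mul]
      rw [Finset.sum_ite_eq (Finset.univ : Finset (Fin m)) j (fun n => g (Sum.inl n))]
      simp [add_comm]

variable (G : SCFG m k ρ)

theorem qE_ne_top (hp : ∀ i : Fin m,
      ∑ π ∈ Finset.univ.filter (fun π => G.prem π = i), G.pn π = 1)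
    (s : List (Fin m ⊕ Fin k)) : G.qE s ≠ ⊤ :=
  ne_top_of_le_ne_top ENNReal.one_ne_top (G.qE_le_one hp s)

noncomputable def qR (G : SCFG m k ρ) (s : List (Fin m ⊕ Fin k)) : ℝ := (G.qE s).toReal

theorem qR_nonneg (s : List (Fin m ⊕ Fin k)) : 0 ≤ G.qR s := ENNReal.toReal_nonneg

theorem qR_le_one (hp : ∀ i : Fin m,
      ∑ π ∈ Finset.univ.filter (fun π => G.prem π = i), G.pn π = 1)
    (s : List (Fin m ⊕ Fin k)) : G.qR s ≤ 1 := by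
  rw [qR, ← ENNReal.toReal_one]
  exact ENNReal.toReal_mono ENNReal.one_ne_top (G.qE_le_one hp s)

theorem qR_singleton_inr (a : Fin k) : G.qR [Sum.inr a] = 1 := by
  rw [qR, G.qE_singleton_inr, ENNReal.toReal_one]

theorem qR_rhs (π : ρ) :
    G.qR (G.rhs π) = ((G.rhs π).map (fun sym => G.qR [sym])).prod := by
  rw [qR, G.qE_eq_prod, toReal_list_prod, List.map_map]
  rfl

theorem qR_one_step (hp : ∀ i : Fin m,
      ∑ π ∈ Finset.univ.filter (fun π => G.prem π = i), G.pn π = 1) (i : Fin m) :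
    G.qR [Sum.inl i] = ∑ π ∈ Finset.univ.filter (fun π => G.prem π = i),
      G.p π * ((G.rhs π).map (fun sym => G.qR [sym])).prod := by
  rw [qR, G.qE_one_step i, ENNReal.toReal_sum (fun π _ =>
    ENNReal.mul_ne_top ENNReal.coe_ne_top (G.qE_ne_top hp _))]
  refine Finset.sum_congr rfl (fun π _ => ?_)
  rw [ENNReal.toReal_mul, ENNReal.coe_toReal, ← G.qR_rhs π]
  rfl

theorem key_ineq (hproper : ∀ i : Fin m,
      ∑ π ∈ Finset.univ.filter (fun π => G.prem π = i), G.p π = 1)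
    (hp : ∀ i : Fin m,
      ∑ π ∈ Finset.univ.filter (fun π => G.prem π = i), G.pn π = 1) (i : Fin m) :
    1 - G.qR [Sum.inl i]
      ≤ ∑ n : Fin m, G.expectationMatrix i n * (1 - G.qR [Sum.inl n]) := by
  have step1 : 1 - G.qR [Sum.inl i]
      = ∑ π ∈ Finset.univ.filter (fun π => G.prem π = i),
          G.p π * (1 - ((G.rhs π).map (fun sym => G.qR [sym])).prod) := by
    calc 1 - G.qR [Sum.inl i]
        = (∑ π ∈ Finset.univ.filter (fun π => G.prem π = i), G.p π)
          - ∑ π ∈ Finset.univ.filter (fun π => G.prem π = i),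
              G.p π * ((G.rhs π).map (fun sym => G.qR [sym])).prod := by
          rw [hproper i, G.qR_one_step hp i]
      _ = _ := by
          rw [← Finset.sum_sub_distrib]
          refine Finset.sum_congr rfl (fun π _ => ?_)
          ring
  have step2 : ∀ π : ρ, (1 - ((G.rhs π).map (fun sym => G.qR [sym])).prod)
      ≤ ∑ n : Fin m, ((G.rhs π).count (Sum.inl n) : ℝ) * (1 - G.qR [Sum.inl n]) := by
    intro π
    have h1 := one_sub_prod_le ((G.rhs π).map (fun sym => G.qR [sym])) (by
      intro x hx
      rw [List.mem_map] at hx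
      obtain ⟨sym, -, rfl⟩ := hx
      exact ⟨G.qR_nonneg _, G.qR_le_one hp _⟩)
    rw [List.map_map] at h1
    have h2 := sum_map_count (G.rhs π) (fun sym => 1 - G.qR [sym]) (fun a => by
      show 1 - G.qR [Sum.inr a] = 0
      rw [G.qR_singleton_inr a]; ring)
    refine h1.trans (le_of_eq ?_)
    rw [show ((fun x => 1 - x) ∘ fun sym => G.qR [sym]) = fun sym => 1 - G.qR [sym] from rfl]
    exact h2
  calc 1 - G.qR [Sum.inl i]
      ≤ ∑ π ∈ Finset.univ.filter (fun π => G.prem π = i),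
          G.p π * ∑ n : Fin m, ((G.rhs π).count (Sum.inl n) : ℝ) * (1 - G.qR [Sum.inl n]) := by
        rw [step1]
        exact Finset.sum_le_sum (fun π _ =>
          mul_le_mul_of_nonneg_left (step2 π) (G.p_nonneg π))
    _ = ∑ n : Fin m, G.expectationMatrix i n * (1 - G.qR [Sum.inl n]) := by
        simp_rw [Finset.mul_sum]
        rw [Finset.sum_comm]
        refine Finset.sum_congr rfl (fun n _ => ?_)
        simp only [expectationMatrix]
        rw [Finset.sum_mul]
        refine Finset.sum_congr rfl (fun π _ => ?_)
        ring

end SCFG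

namespace SCFG
open Filter Topology

attribute [local instance] Matrix.linftyOpNormedAddCommGroup Matrix.linftyOpNormedRing
  Matrix.linftyOpNormedAlgebra

theorem matrix_entry_norm_le {d : ℕ} (B : Matrix (Fin d) (Fin d) ℂ) (i j : Fin d) :
    ‖B i j‖ ≤ ‖B‖ := by
  have h1 : ‖B i j‖₊ ≤ ∑ j', ‖B i j'‖₊ :=
    Finset.single_le_sum (f := fun j' => ‖B i j'‖₊) (fun _ _ => zero_le) (Finset.mem_univ j)
  have h2 : (∑ j', ‖B i j'‖₊) ≤ ‖B‖₊ := by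
    rw [Matrix.linfty_opNNNorm_def]
    exact Finset.le_sup (f := fun i => ∑ j', ‖B i j'‖₊) (Finset.mem_univ i)
  exact_mod_cast h1.trans h2

theorem pow_entry_tendsto_zero {d : ℕ} (M : Matrix (Fin d) (Fin d) ℝ)
    (hrad : spectralRadius ℂ (M.map Complex.ofReal) < 1) (i j : Fin d) :
    Tendsto (fun N : ℕ => (M ^ N) i j) atTop (𝓝 0) := by
  haveI : CompleteSpace (Matrix (Fin d) (Fin d) ℂ) := FiniteDimensional.complete ℂ _
  set A : Matrix (Fin d) (Fin d) ℂ := M.map Complex.ofReal with hA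
  have hgel := spectrum.pow_norm_pow_one_div_tendsto_nhds_spectralRadius A
  have hne : spectralRadius ℂ A ≠ ⊤ := (hrad.trans ENNReal.one_lt_top).ne
  have hR1 : (spectralRadius ℂ A).toReal < 1 := by
    rw [← ENNReal.toReal_one]
    exact (ENNReal.toReal_lt_toReal hne ENNReal.one_ne_top).mpr hrad
  have htr : Tendsto (fun n : ℕ => ‖A ^ n‖ ^ (1 / n : ℝ)) atTop
      (𝓝 ((spectralRadius ℂ A).toReal)) := by
    have := (ENNReal.tendsto_toReal hne).comp hgel
    refine this.congr (fun n => ?_)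
    exact ENNReal.toReal_ofReal (Real.rpow_nonneg (norm_nonneg _) _)
  obtain ⟨r, hRr, hr1⟩ := exists_between hR1
  have hr0 : 0 ≤ r := le_trans ENNReal.toReal_nonneg hRr.le
  have hev : ∀ᶠ n : ℕ in atTop, ‖A ^ n‖ ^ (1 / n : ℝ) < r := htr.eventually_lt_const hRr
  have hmap : ∀ n : ℕ, A ^ n = (M ^ n).map Complex.ofReal := by
    intro n
    have : A = Complex.ofRealHom.mapMatrix M := rfl
    rw [this, ← map_pow]
    rfl
  have hbound : ∀ᶠ n : ℕ in atTop, ‖(M ^ n) i j‖ ≤ r ^ n := by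
    filter_upwards [hev, eventually_ge_atTop 1] with n hn h1n
    have h0 : (0 : ℝ) ≤ ‖A ^ n‖ := norm_nonneg _
    have hpow : (‖A ^ n‖ ^ (1 / n : ℝ)) ^ (n : ℕ) ≤ r ^ n :=
      pow_le_pow_left₀ (Real.rpow_nonneg h0 _) hn.le n
    have hEq : (‖A ^ n‖ ^ (1 / n : ℝ)) ^ (n : ℕ) = ‖A ^ n‖ := by
      rw [← Real.rpow_natCast (‖A ^ n‖ ^ (1 / n : ℝ)) n, ← Real.rpow_mul h0,
        one_div, inv_mul_cancel₀ (by exact_mod_cast Nat.one_le_iff_ne_zero.mp h1n : (n : ℝ) ≠ 0),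
        Real.rpow_one]
    rw [hEq] at hpow
    have hentry : ‖(M ^ n) i j‖ = ‖(A ^ n) i j‖ := by
      rw [hmap n]
      simp [Matrix.map_apply]
    rw [hentry]
    exact (matrix_entry_norm_le _ i j).trans hpow
  exact squeeze_zero_norm' hbound (tendsto_pow_atTop_nhds_zero_of_lt_one hr0 hr1)

end SCFG

namespace SCFG
open Filter Topology
variable {m k : ℕ} {ρ : Type} [Fintype ρ] (G : SCFG m k ρ)

theorem completeDeriv_iff (i : Fin m) (l : List ρ) :
    G.CompleteDeriv i l ↔ G.derivB [Sum.inl i] l = true :=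
  ⟨fun ⟨s, h1, h2⟩ => G.derivB_of_deriv h1 h2, fun h => G.deriv_of_derivB h⟩

theorem weight_eq (l : List ρ) : G.weight l = ((G.wN l : ℝ≥0) : ℝ) := by
  induction l with
  | nil => simp [weight]
  | cons π l ih =>
    rw [weight, List.map_cons, List.prod_cons, wN_cons, NNReal.coe_mul]
    rw [weight] at ih
    rw [ih]
    rfl

theorem pn_proper (hproper : ∀ i : Fin m,
      ∑ π ∈ Finset.univ.filter (fun π => G.prem π = i), G.p π = 1) (i : Fin m) :
    ∑ π ∈ Finset.univ.filter (fun π => G.prem π = i), G.pn π = 1 := by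
  have : ((∑ π ∈ Finset.univ.filter (fun π => G.prem π = i), G.pn π : ℝ≥0) : ℝ) = 1 := by
    push_cast
    exact hproper i
  exact_mod_cast this

theorem mulVec_mono {d : ℕ} (M : Matrix (Fin d) (Fin d) ℝ) (hM : ∀ i j, 0 ≤ M i j)
    {u w : Fin d → ℝ} (h : ∀ n, u n ≤ w n) (i : Fin d) :
    (M.mulVec u) i ≤ (M.mulVec w) i := by
  simp only [Matrix.mulVec, dotProduct]
  exact Finset.sum_le_sum fun n _ => mul_le_mul_of_nonneg_left (h n) (hM i n)

theorem iterate_le {d : ℕ} (M : Matrix (Fin d) (Fin d) ℝ) (hM : ∀ i j, 0 ≤ M i j)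
    {v : Fin d → ℝ} (hv : ∀ i, v i ≤ (M.mulVec v) i) :
    ∀ (N : ℕ) (i : Fin d), v i ≤ ((M ^ N).mulVec v) i
  | 0, i => by simp [Matrix.one_mulVec]
  | N + 1, i => by
    calc v i ≤ (M.mulVec v) i := hv i
      _ ≤ (M.mulVec ((M ^ N).mulVec v)) i :=
          mulVec_mono M hM (fun n => iterate_le M hM hv N n) i
      _ = ((M ^ (N + 1)).mulVec v) i := by rw [Matrix.mulVec_mulVec, ← pow_succ']

theorem qE_eq_one
    (hproper : ∀ i : Fin m,
      ∑ π ∈ Finset.univ.filter (fun π => G.prem π = i), G.p π = 1)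
    (hrad : spectralRadius ℂ (G.expectationMatrix.map Complex.ofReal) < 1) (i : Fin m) :
    G.qE [Sum.inl i] = 1 := by
  have hp := G.pn_proper hproper
  set M := G.expectationMatrix with hMdef
  set v : Fin m → ℝ := fun n => 1 - G.qR [Sum.inl n] with hvdef
  have hM : ∀ i j, 0 ≤ M i j := by
    intro i j
    refine Finset.sum_nonneg fun π _ => mul_nonneg (G.p_nonneg π) (by positivity)
  have hv : ∀ i, v i ≤ (M.mulVec v) i := by
    intro i
    have := G.key_ineq hproper hp i
    simpa [Matrix.mulVec, dotProduct, hvdef] using this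
  have hiter := iterate_le M hM hv
  have hlim : Tendsto (fun N : ℕ => ((M ^ N).mulVec v) i) atTop (𝓝 0) := by
    have : ∀ N : ℕ, ((M ^ N).mulVec v) i = ∑ n : Fin m, (M ^ N) i n * v n := by
      intro N; simp [Matrix.mulVec, dotProduct]
    rw [funext this]
    have h0 : (0 : ℝ) = ∑ n : Fin m, (0 : ℝ) * v n := by simp
    rw [h0]
    exact tendsto_finset_sum _ (fun n _ =>
      (pow_entry_tendsto_zero M hrad i n).mul_const (v n))
  have hvle : v i ≤ 0 := ge_of_tendsto hlim (Eventually.of_forall fun N => hiter N i)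
  have hq1 : G.qR [Sum.inl i] = 1 :=
    le_antisymm (G.qR_le_one hp _) (by simpa [hvdef] using hvle)
  rw [qR] at hq1
  rw [← ENNReal.ofReal_toReal (G.qE_ne_top hp [Sum.inl i]), hq1]
  simp

theorem main_hasSum
    (hproper : ∀ i : Fin m,
      ∑ π ∈ Finset.univ.filter (fun π => G.prem π = i), G.p π = 1)
    (hrad : spectralRadius ℂ (G.expectationMatrix.map Complex.ofReal) < 1) (i : Fin m) :
    HasSum (fun l : {l : List ρ // G.CompleteDeriv i l} => G.weight l.1) 1 := by
  have h1 := G.qE_eq_one hproper hrad i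
  have h2 : HasSum (fun l : {l : List ρ // G.derivB [Sum.inl i] l = true} =>
      ((G.wN l.1 : ℝ≥0) : ℝ≥0∞)) 1 := by
    have hs := ENNReal.summable.hasSum
      (f := fun l : {l : List ρ // G.derivB [Sum.inl i] l = true} => ((G.wN l.1 : ℝ≥0) : ℝ≥0∞))
    rw [show ∑' l : {l : List ρ // G.derivB [Sum.inl i] l = true},
        ((G.wN l.1 : ℝ≥0) : ℝ≥0∞) = G.qE [Sum.inl i] from rfl, h1] at hs
    exact hs
  rw [show (1 : ℝ≥0∞) = ((1 : ℝ≥0) : ℝ≥0∞) by simp] at h2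
  have h3 := ENNReal.hasSum_coe.mp h2
  have h4 : HasSum (fun l : {l : List ρ // G.derivB [Sum.inl i] l = true} =>
      ((G.wN l.1 : ℝ≥0) : ℝ)) 1 := by
    have := NNReal.hasSum_coe.mpr h3
    simpa using this
  have h5 : HasSum ((fun l : {l : List ρ // G.derivB [Sum.inl i] l = true} =>
      ((G.wN l.1 : ℝ≥0) : ℝ)) ∘ (Equiv.subtypeEquivRight (fun l => G.completeDeriv_iff i l))) 1 :=
    (Equiv.hasSum_iff _).mpr h4
  have h6 : (fun l : {l : List ρ // G.CompleteDeriv i l} => G.weight l.1)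
      = ((fun l : {l : List ρ // G.derivB [Sum.inl i] l = true} =>
          ((G.wN l.1 : ℝ≥0) : ℝ)) ∘ (Equiv.subtypeEquivRight (fun l => G.completeDeriv_iff i l))) := by
    funext l
    simp only [Function.comp_apply, Equiv.subtypeEquivRight, Equiv.coe_fn_mk]
    exact G.weight_eq l.1
  rw [h6]
  exact h5

end SCFG

/-- **Consistency at every nonterminal (Booth–Thompson)**: if a proper, reduced SCFG
(all rule probabilities positive, all nonterminals accessible and productive) has
expectation matrix of spectral radius `< 1` (as a complex matrix), then for every
nonterminal `i` the probabilities of all complete leftmost derivations starting at `i`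
sum to `1`. -/
theorem scfg_consistent_all_of_spectralRadius_lt_one {m k : ℕ} [NeZero m] {ρ : Type}
    [Fintype ρ] (G : SCFG m k ρ)
    (hproper : G.Proper)
    (hpos : ∀ π, 0 < G.p π)
    (huseful : ∀ i : Fin m, G.Accessible i ∧ G.Productive i)
    (hρ : spectralRadius ℂ (G.expectationMatrix.map Complex.ofReal) < 1) :
    ∀ i : Fin m,
      HasSum (fun l : {l : List ρ // G.CompleteDeriv i l} => G.weight l.1) 1 := by
  exact fun i => G.main_hasSum hproper hρ i
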